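/- Let S be a finite set, let k : S × S → ℝ be nonnegative with k(s,s) = 0 for all s, and let c̄ ∈ ℝ^S be strictly positive satisfying the stationarity condition Σ_{ℓ∈S} k(s,ℓ)·c̄_ℓ = (Σ_{ℓ∈S} k(ℓ,s))·c̄_s for every s ∈ S. Define the S×S matrix Â by Â_{ss'} = (c̄_{s'}/c̄_s)·k(s,s') for s ≠ s' and Â_{ss} = −Σ_{ℓ∈S} k(ℓ,s). Then for all i, o ∈ S and all t ≥ 0, 0 ≤ (e^{tÂ})_{oi} ≤ 1. (In a reversible unimolecular reaction network, not necessarily satisfying detailed balance, the Sensitivity satisfies S ≤ 1.) -/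

import Mathlib

open Matrix NormedSpace

section Aux

variable {S : Type*} [Fintype S] [DecidableEq S]

private def entryLM (o i : S) : Matrix S S ℝ →ₗ[ℝ] ℝ where
  toFun M := M o i
  map_add' _ _ := rfl
  map_smul' _ _ := rfl

private def mulVecLM (v : S → ℝ) : Matrix S S ℝ →ₗ[ℝ] (S → ℝ) where
  toFun M := M *ᵥ v
  map_add' A B := by ext s; simp [Matrix.add_mulVec]
  map_smul' c A := by ext s; simp [Matrix.smul_mulVec]

private lemma exp_entry_hasSum (M : Matrix S S ℝ) (o i : S) :
    HasSum (fun n : ℕ => ((n.factorial : ℝ)⁻¹) * (M ^ n) o i) (exp M o i) := by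
  letI : SeminormedRing (Matrix S S ℝ) := Matrix.linftyOpSemiNormedRing
  letI : NormedRing (Matrix S S ℝ) := Matrix.linftyOpNormedRing
  letI : NormedAlgebra ℝ (Matrix S S ℝ) := Matrix.linftyOpNormedAlgebra
  have h := NormedSpace.exp_series_hasSum_exp' (𝕂 := ℝ) M
  have hc : Continuous (entryLM (S := S) o i) := LinearMap.continuous_of_finiteDimensional _
  have := h.map (entryLM (S := S) o i).toAddMonoidHom hc
  simp only [Function.comp_def, entryLM, LinearMap.toAddMonoidHom_coe, LinearMap.coe_mk,
    AddHom.coe_mk, Matrix.smul_apply, smul_eq_mul] at this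
  exact this

private lemma exp_mulVec (M : Matrix S S ℝ) (v : S → ℝ) (hv : M *ᵥ v = 0) :
    exp M *ᵥ v = v := by
  letI : SeminormedRing (Matrix S S ℝ) := Matrix.linftyOpSemiNormedRing
  letI : NormedRing (Matrix S S ℝ) := Matrix.linftyOpNormedRing
  letI : NormedAlgebra ℝ (Matrix S S ℝ) := Matrix.linftyOpNormedAlgebra
  have h := NormedSpace.exp_series_hasSum_exp' (𝕂 := ℝ) M
  have hc : Continuous (mulVecLM (S := S) v) := LinearMap.continuous_of_finiteDimensional _
  have h2 := h.map (mulVecLM (S := S) v).toAddMonoidHom hc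
  have hf : ∀ n : ℕ, ((n.factorial : ℝ)⁻¹ • M ^ n) *ᵥ v
      = if n = 0 then v else 0 := by
    intro n
    cases n with
    | zero => simp [Matrix.one_mulVec]
    | succ m =>
        rw [if_neg (Nat.succ_ne_zero m), Matrix.smul_mulVec, pow_succ,
          ← Matrix.mulVec_mulVec, hv, Matrix.mulVec_zero, smul_zero]
  have h3 : HasSum (fun n : ℕ => if n = 0 then v else (0 : S → ℝ)) (exp M *ᵥ v) := by
    simp only [Function.comp_def, mulVecLM, LinearMap.toAddMonoidHom_coe,
      LinearMap.coe_mk, AddHom.coe_mk, hf] at h2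
    exact h2
  have h4 : HasSum (fun n : ℕ => if n = 0 then v else (0 : S → ℝ)) v := by
    have := hasSum_single (f := fun n : ℕ => if n = 0 then v else (0 : S → ℝ)) 0
      (by intro b hb; simp [hb])
    simpa using this
  exact h3.unique h4

private lemma pow_entry_nonneg {M : Matrix S S ℝ} (hM : ∀ s s', 0 ≤ M s s') (n : ℕ) :
    ∀ s s', 0 ≤ (M ^ n) s s' := by
  induction n with
  | zero => intro s s'; simp [Matrix.one_apply]; positivity
  | succ m ih =>
      intro s s'
      rw [pow_succ, Matrix.mul_apply]
      exact Finset.sum_nonneg fun j _ => mul_nonneg (ih s j) (hM j s')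

/-- exp of a Metzler matrix has nonnegative entries. -/
private lemma exp_nonneg_of_metzler {M : Matrix S S ℝ}
    (hM : ∀ s s', s ≠ s' → 0 ≤ M s s') (o i : S) : 0 ≤ exp M o i := by
  set c : ℝ := ∑ s, |M s s| with hc
  have hcs : ∀ s, 0 ≤ M s s + c := by
    intro s
    have h1 : |M s s| ≤ c := Finset.single_le_sum (f := fun s => |M s s|)
      (fun j _ => abs_nonneg _) (Finset.mem_univ s)
    have := neg_abs_le (M s s)
    linarith
  set N : Matrix S S ℝ := M + c • (1 : Matrix S S ℝ) with hN
  have hNpos : ∀ s s', 0 ≤ N s s' := by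
    intro s s'
    by_cases h : s = s'
    · subst h; simpa [hN, Matrix.one_apply] using hcs s
    · simpa [hN, Matrix.one_apply, h] using hM s s' h
  have hexpN : ∀ s s', 0 ≤ exp N s s' := by
    intro s s'
    have h := exp_entry_hasSum N s s'
    have hterm : ∀ n : ℕ, 0 ≤ ((n.factorial : ℝ)⁻¹) * (N ^ n) s s' := fun n =>
      mul_nonneg (by positivity) (pow_entry_nonneg hNpos n s s')
    exact hasSum_le hterm hasSum_zero h
  have hsplit : exp M = exp N * exp ((-c) • (1 : Matrix S S ℝ)) := by
    rw [← Matrix.exp_add_of_commute]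
    · congr 1
      simp [hN]
    · exact (Commute.one_right N).smul_right (-c)
  have hdiag : exp ((-c) • (1 : Matrix S S ℝ)) = Matrix.diagonal (fun _ => Real.exp (-c)) := by
    have h1 : (-c) • (1 : Matrix S S ℝ) = Matrix.diagonal (fun _ => -c) := by
      ext s s'
      by_cases h : s = s' <;> simp [Matrix.one_apply, Matrix.diagonal_apply, h]
    rw [h1, Matrix.exp_diagonal, Pi.exp_def]
    simp only [← Real.exp_eq_exp_ℝ]
  rw [hsplit, hdiag, Matrix.mul_diagonal]
  exact mul_nonneg (hexpN o i) (Real.exp_nonneg _)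

end Aux

/-- Theorem 6.2 (`th:upper-bound-sensitivity-dissipative`): in a reversible unimolecular
reaction network, not necessarily satisfying detailed balance, the Sensitivity is at most 1:
for the linearization `Â` around a steady state `c̄` we have `0 ≤ (e^{tÂ})_{oi} ≤ 1`. -/
theorem sensitivity_le_one_unimolecular
    {S : Type*} [Fintype S] [DecidableEq S]
    (k : S → S → ℝ) (hk : ∀ s s', 0 ≤ k s s') (hkd : ∀ s, k s s = 0)
    (cbar : S → ℝ) (hcbar : ∀ s, 0 < cbar s)
    (hstat : ∀ s, ∑ ℓ, k s ℓ * cbar ℓ = (∑ ℓ, k ℓ s) * cbar s)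
    (Ahat : Matrix S S ℝ)
    (hA : ∀ s s', Ahat s s' =
      if s = s' then -(∑ ℓ, k ℓ s) else (cbar s' / cbar s) * k s s') :
    ∀ (i o : S) (t : ℝ), 0 ≤ t →
      0 ≤ exp (t • Ahat) o i ∧ exp (t • Ahat) o i ≤ 1 := by
  intro i o t ht
  set M : Matrix S S ℝ := t • Ahat with hM
  -- Metzler
  have hmetz : ∀ s s', s ≠ s' → 0 ≤ M s s' := by
    intro s s' h
    have : Ahat s s' = (cbar s' / cbar s) * k s s' := by rw [hA, if_neg h]
    have h0 : 0 ≤ Ahat s s' := by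
      rw [this]
      exact mul_nonneg (div_nonneg (hcbar s').le (hcbar s).le) (hk s s')
    simpa [hM] using mul_nonneg ht h0
  -- row sums zero
  have hrow : ∀ s, ∑ s', Ahat s s' = 0 := by
    intro s
    have hsum : ∑ s', Ahat s s'
        = -(∑ ℓ, k ℓ s) + ∑ s' ∈ Finset.univ \ {s}, (cbar s' / cbar s) * k s s' := by
      rw [← Finset.sum_sdiff (Finset.subset_univ {s})]
      rw [Finset.sum_singleton, hA s s, if_pos rfl, add_comm]
      congr 1
      exact Finset.sum_congr rfl fun s' hs' => by
        rw [hA]; rw [Finset.mem_sdiff, Finset.mem_singleton] at hs'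
        rw [if_neg (fun h => hs'.2 h.symm)]
    have h2 : ∑ s' ∈ Finset.univ \ {s}, (cbar s' / cbar s) * k s s'
        = (∑ ℓ, k s ℓ * cbar ℓ) / cbar s := by
      rw [Finset.sum_div, ← Finset.sum_sdiff (Finset.subset_univ {s}), Finset.sum_singleton,
        hkd s, zero_mul, zero_div, add_zero]
      exact Finset.sum_congr rfl fun s' _ => by field_simp
    rw [hsum, h2, hstat s, mul_div_assoc, div_self (hcbar s).ne', mul_one]
    ring
  have hvec : M *ᵥ (fun _ => (1 : ℝ)) = 0 := by
    ext s
    simp only [hM, Matrix.mulVec, dotProduct, mul_one, Matrix.smul_apply, smul_eq_mul,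
      Pi.zero_apply]
    rw [← Finset.mul_sum, hrow s, mul_zero]
  have hnn : ∀ o' i', 0 ≤ exp M o' i' := fun o' i' => exp_nonneg_of_metzler hmetz o' i'
  refine ⟨hnn o i, ?_⟩
  have hsum1 : ∑ j, exp M o j = 1 := by
    have := congrFun (exp_mulVec M (fun _ => (1 : ℝ)) hvec) o
    simpa [Matrix.mulVec, dotProduct] using this
  calc exp M o i ≤ ∑ j, exp M o j :=
        Finset.single_le_sum (f := fun j => exp M o j) (fun j _ => hnn o j) (Finset.mem_univ i)
    _ = 1 := hsum1
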